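/- Let M ⊇ M_1 ⊇ ... be a left FA-glider in an A-module Ω, L/K a field extension with filtration FL, and f(A⊗_K L) the tensor product filtration f_q = Σ_{k≤q} F_kA ⊗ F_{q-k}L. Then the chain (M ⊗ L)_p := Σ_{i ≥ p} M_i ⊗ F_{i-p}L inside Ω ⊗_K L is a left f(A⊗_K L)-glider: f_j(A⊗_K L)·(M⊗L)_i ⊆ (M⊗L)_{i-j} for all j ≤ i. -/

import Mathlib

open scoped TensorProduct

/-- The tensor product filtration `f_q(A ⊗_K L) = Σ_{k ≤ q} F_k A ⊗ F_{q-k} L`. -/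
def tensorFiltPiece {K A L : Type*} [Field K] [Ring A] [Algebra K A]
    [Field L] [Algebra K L]
    (FA : ℤ → Submodule ℤ A) (FL : ℤ → Submodule ℤ L) (q : ℤ) :
    Submodule ℤ (A ⊗[K] L) :=
  Submodule.span ℤ
    {z : A ⊗[K] L | ∃ k : ℤ, k ≤ q ∧ ∃ a ∈ FA k, ∃ l ∈ FL (q - k), z = a ⊗ₜ[K] l}

/-- A left `FA`-glider inside an `A`-module `Ω`. -/
def IsGliderMod {K A Ω : Type*} [Field K] [Ring A] [Algebra K A]
    [AddCommGroup Ω] [Module K Ω] [Module A Ω]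
    (FA : ℤ → Submodule ℤ A) (M : ℕ → Submodule ℤ Ω) : Prop :=
  Antitone M ∧
    ∀ (i : ℤ) (j : ℕ), i ≤ (j : ℤ) →
      ∀ a ∈ FA i, ∀ m ∈ M j, a • m ∈ M ((j : ℤ) - i).toNat

/-- The `K`-linear map `A →ₗ[K] End(Ω)` given by the `A`-action on `Ω`. -/
def smulEnd (K : Type*) {A : Type*} (Ω : Type*) [Field K] [Ring A] [Algebra K A]
    [AddCommGroup Ω] [Module K Ω] [Module A Ω] [IsScalarTower K A Ω]
    [SMulCommClass K A Ω] : A →ₗ[K] (Ω →ₗ[K] Ω) where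
  toFun a :=
    { toFun := fun m => a • m
      map_add' := fun m m' => smul_add a m m'
      map_smul' := fun c m => (smul_comm c a m).symm }
  map_add' a b := LinearMap.ext fun m => add_smul a b m
  map_smul' c a := LinearMap.ext fun m => smul_assoc c a m

/-- The action of `A ⊗_K L` on `Ω ⊗_K L`, by `(a ⊗ l) • (m ⊗ t) = (a • m) ⊗ (l * t)`. -/
noncomputable def gliderAct (K : Type*) {A L Ω : Type*} [Field K] [Ring A] [Algebra K A]
    [Field L] [Algebra K L] [AddCommGroup Ω] [Module K Ω] [Module A Ω]
    [IsScalarTower K A Ω] [SMulCommClass K A Ω] :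
    (A ⊗[K] L) →ₗ[K] ((Ω ⊗[K] L) →ₗ[K] (Ω ⊗[K] L)) :=
  (TensorProduct.homTensorHomMap (RingHom.id K) Ω L Ω L).comp
    (TensorProduct.map (smulEnd K Ω) (LinearMap.mul K L))

/-- The tensor product glider chain `(M ⊗ L)_p = Σ_{i ≥ p} M_i ⊗ F_{i-p} L`. -/
def gliderTensor {K L Ω : Type*} [Field K] [Field L] [Algebra K L]
    [AddCommGroup Ω] [Module K Ω]
    (M : ℕ → Submodule ℤ Ω) (FL : ℤ → Submodule ℤ L) (p : ℕ) :
    Submodule ℤ (Ω ⊗[K] L) :=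
  Submodule.span ℤ
    {z : Ω ⊗[K] L | ∃ i : ℕ, p ≤ i ∧ ∃ m ∈ M i, ∃ l ∈ FL ((i : ℤ) - (p : ℤ)),
      z = m ⊗ₜ[K] l}

/-- Let `M` be a left `FA`-glider in an `A`-module `Ω` and `L/K` a field extension with
filtration `FL`. Then `(M ⊗ L)_p = Σ_{i ≥ p} M_i ⊗ F_{i-p} L` is a left glider for the
tensor product filtration `f(A ⊗_K L)`: `f_j · (M ⊗ L)_i ⊆ (M ⊗ L)_{i-j}` for `j ≤ i`. -/
theorem stmt_19 {K A L Ω : Type*} [Field K] [Ring A] [Algebra K A]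
    [Field L] [Algebra K L] [AddCommGroup Ω] [Module K Ω] [Module A Ω]
    [IsScalarTower K A Ω] [SMulCommClass K A Ω]
    (FK : ℤ → Submodule ℤ K) (FA : ℤ → Submodule ℤ A) (FL : ℤ → Submodule ℤ L)
    (hKmono : Monotone FK) (hKone : (1 : K) ∈ FK 0)
    (hKmul : ∀ n m : ℤ, ∀ x ∈ FK n, ∀ y ∈ FK m, x * y ∈ FK (n + m))
    (hAmono : Monotone FA) (hAone : (1 : A) ∈ FA 0)
    (hAmul : ∀ n m : ℤ, ∀ x ∈ FA n, ∀ y ∈ FA m, x * y ∈ FA (n + m))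
    (hLmono : Monotone FL) (hLone : (1 : L) ∈ FL 0)
    (hLmul : ∀ n m : ℤ, ∀ x ∈ FL n, ∀ y ∈ FL m, x * y ∈ FL (n + m))
    (hextA : ∀ (n : ℤ) (x : K), algebraMap K A x ∈ FA n ↔ x ∈ FK n)
    (hextL : ∀ (n : ℤ) (x : K), algebraMap K L x ∈ FL n ↔ x ∈ FK n)
    (M : ℕ → Submodule ℤ Ω) (hM : IsGliderMod (K := K) FA M) :
    ∀ (j i : ℕ), j ≤ i →
      ∀ x ∈ tensorFiltPiece (K := K) FA FL (j : ℤ),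
        ∀ w ∈ gliderTensor (K := K) M FL i,
          gliderAct K x w ∈ gliderTensor (K := K) M FL (i - j) := by
  intro j i hji x hx w hw
  induction hx using Submodule.span_induction generalizing w with
  | mem x hxmem =>
    induction hw using Submodule.span_induction with
    | mem w hwmem =>
      obtain ⟨k, hkj, a, ha, l, hl, rfl⟩ := hxmem
      obtain ⟨i', hii', m, hm, t, ht, rfl⟩ := hwmem
      have hact : gliderAct K (a ⊗ₜ[K] l) (m ⊗ₜ[K] t) = (a • m) ⊗ₜ[K] (l * t) := by
        simp [gliderAct, smulEnd, TensorProduct.homTensorHomMap_apply]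
      rw [hact]
      apply Submodule.subset_span
      refine ⟨((i' : ℤ) - k).toNat, ?_, a • m, hM.2 k i' (hkj.trans (by exact_mod_cast hji.trans hii')) a ha m hm, l * t, ?_, rfl⟩
      · omega
      · have := hLmul _ _ l hl t ht
        have h1 : (((((i' : ℤ) - k).toNat : ℤ)) - ((i - j : ℕ) : ℤ)) = ((j : ℤ) - k) + ((i' : ℤ) - i) := by
          omega
        rwa [h1]
    | zero => simp
    | add w1 w2 _ _ h1 h2 => rw [map_add]; exact Submodule.add_mem _ h1 h2
    | smul n w _ h => rw [map_zsmul]; exact Submodule.smul_mem _ n h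
  | zero => simp
  | add x1 x2 _ _ h1 h2 =>
    rw [map_add, LinearMap.add_apply]
    exact Submodule.add_mem _ (h1 w hw) (h2 w hw)
  | smul n x _ h =>
    have : gliderAct K (n • x) w = n • gliderAct K x w := by
      rw [map_zsmul]; rfl
    rw [this]
    exact Submodule.smul_mem _ n (h w hw)
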